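/- arXiv:1310.6852 — 2 statements merged into one kernel-verified Lean document; each statement's English description precedes it below -/
import Mathlib

section
/- Let 0 < λ < 1/2 and let x, r satisfy 0 < r < x. Then for every z with cosh(x−r) ≤ z ≤ cosh(x+r) one has ∫_{−1}^{(cosh r − z·cosh x)/(√(z²−1)·sinh x)} (1−u²)^{λ−1} du ≤ (1/λ) · (sinh r / sinh x)^{2λ}. -/
open Real MeasureTheory Set

set_option maxHeartbeats 1000000

/-- Estimate (28): for `0 < r < x` and `cosh(x−r) ≤ z ≤ cosh(x+r)`,
`∫_{−1}^{(cosh r − z·cosh x)/(√(z²−1)·sinh x)} (1−u²)^{λ−1} du ≤ (1/λ)·(sinh r / sinh x)^{2λ}`. -/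
theorem inner_integral_estimate (lam x r z : ℝ) (hlam0 : 0 < lam) (hlam1 : lam < 1/2)
    (hr : 0 < r) (hx : r < x)
    (hz1 : Real.cosh (x - r) ≤ z) (hz2 : z ≤ Real.cosh (x + r)) :
    (∫ u in (-1:ℝ)..((Real.cosh r - z * Real.cosh x) / (Real.sqrt (z^2 - 1) * Real.sinh x)),
        (1 - u^2) ^ (lam - 1))
      ≤ (1/lam) * (Real.sinh r / Real.sinh x) ^ (2*lam) := by
  have hx0 : 0 < x := hr.trans hx
  have hxr : 0 < x - r := by linarith
  set a := Real.sinh x with ha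
  set b := Real.cosh x with hb
  set c := Real.sinh r with hc
  set d := Real.cosh r with hd
  have ha0 : 0 < a := Real.sinh_pos_iff.mpr hx0
  have hc0 : 0 < c := Real.sinh_pos_iff.mpr hr
  have hca : c < a := Real.sinh_lt_sinh.mpr hx
  have hb2 : b ^ 2 = a ^ 2 + 1 := Real.cosh_sq x
  have hd2 : d ^ 2 = c ^ 2 + 1 := Real.cosh_sq r
  have hd1 : 1 < d := Real.one_lt_cosh.mpr (ne_of_gt hr)
  have hdb : d < b := by
    rw [hb, hd]
    exact Real.cosh_lt_cosh.mpr (by rw [abs_of_pos hr, abs_of_pos hx0]; exact hx)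
  have hz1' : b * d - a * c ≤ z := by
    rw [Real.cosh_sub] at hz1; linarith
  have hz2' : z ≤ b * d + a * c := by
    rw [Real.cosh_add] at hz2; linarith
  have hzgt1 : 1 < z := by
    refine lt_of_lt_of_le ?_ hz1
    exact Real.one_lt_cosh.mpr (ne_of_gt hxr)
  set w := Real.sqrt (z ^ 2 - 1) with hwdef
  have hz21 : 0 < z ^ 2 - 1 := by nlinarith
  have hw0 : 0 < w := Real.sqrt_pos.mpr hz21
  have hw2 : w ^ 2 = z ^ 2 - 1 := Real.sq_sqrt hz21.le
  have hzbd : 0 ≤ z * b - d := by nlinarith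
  set T := (d - z * b) / (w * a) with hT
  have hwa : 0 < w * a := mul_pos hw0 ha0
  have hT0 : T ≤ 0 := div_nonpos_of_nonpos_of_nonneg (by linarith) hwa.le
  have hT1 : -1 ≤ T := by
    rw [hT, le_div_iff₀ hwa]
    have h2 : (z * b - d) ^ 2 ≤ (w * a) ^ 2 := by
      nlinarith [hw2, mul_nonneg (sub_nonneg.mpr hz1') (sub_nonneg.mpr hz2'), hb2, hd2]
    have h3 := Real.sqrt_le_sqrt h2
    rw [Real.sqrt_sq hzbd, Real.sqrt_sq hwa.le] at h3
    linarith
  have hK : 0 < a ^ 2 - c ^ 2 := by nlinarith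
  have hc2 : 0 < a ^ 2 * b ^ 2 - (a ^ 2 - c ^ 2) ^ 2 := by nlinarith
  -- key quadratic inequality
  have hid : (a^2*b^2 - (a^2-c^2)^2) * ((a*(z*b-d))^2 - (z^2-1)*(a^2-c^2)^2)
      = ((a^2*b^2 - (a^2-c^2)^2)*z - a^2*b*d)^2 + (a^2-c^2)^3*c^2 := by
    linear_combination (a^2*(a^2-c^2)^2) * hb2 - (a^2*(a^2-c^2)^2) * hd2
  have hsq : (z ^ 2 - 1) * (a ^ 2 - c ^ 2) ^ 2 ≤ (a * (z * b - d)) ^ 2 := by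
    nlinarith [hid, hc2, sq_nonneg ((a^2*b^2 - (a^2-c^2)^2)*z - a^2*b*d),
      mul_pos (mul_pos (mul_pos hK hK) hK) (mul_pos hc0 hc0)]
  have hkey : w * (a ^ 2 - c ^ 2) ≤ a * (z * b - d) := by
    have heqq : (w * (a ^ 2 - c ^ 2)) ^ 2 = (z ^ 2 - 1) * (a ^ 2 - c ^ 2) ^ 2 := by
      rw [mul_pow, hw2]
    have hsq' : (w * (a ^ 2 - c ^ 2)) ^ 2 ≤ (a * (z * b - d)) ^ 2 := heqq ▸ hsq
    have h4 := Real.sqrt_le_sqrt hsq'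
    rwa [Real.sqrt_sq (by positivity), Real.sqrt_sq (mul_nonneg ha0.le hzbd)] at h4
  have h1T : 1 + T ≤ (c / a) ^ 2 := by
    rw [div_pow, hT, add_comm, div_add' _ _ _ (ne_of_gt hwa),
      div_le_div_iff₀ hwa (by positivity)]
    nlinarith [mul_le_mul_of_nonneg_left hkey ha0.le]
  -- the integral computations
  have hlam1' : (-1 : ℝ) < lam - 1 := by linarith
  have hInt1 : IntervalIntegrable (fun u : ℝ => (u + 1) ^ (lam - 1)) volume (-1) T := by
    have h0 := (intervalIntegral.intervalIntegrable_rpow' (a := 0) (b := T + 1) hlam1')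
    have := h0.comp_add_right 1
    simpa using this
  have hpt : ∀ u ∈ Set.Icc (-1 : ℝ) T, (1 - u ^ 2) ^ (lam - 1) ≤ (u + 1) ^ (lam - 1) := by
    intro u hu
    rcases eq_or_lt_of_le hu.1 with h | h
    · simp only [← h]
      norm_num [Real.zero_rpow (show lam - 1 ≠ 0 by linarith)]
    · have hu1 : 0 < u + 1 := by linarith
      have hu0 : u ≤ 0 := hu.2.trans hT0
      have hle : u + 1 ≤ 1 - u ^ 2 := by
        have hh := mul_nonpos_of_nonpos_of_nonneg hu0 (by linarith : (0:ℝ) ≤ 1 + u)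
        have he : u * (1 + u) = u + u ^ 2 := by ring
        linarith
      exact Real.rpow_le_rpow_of_nonpos hu1 hle (by linarith)
  have hInt2 : IntervalIntegrable (fun u : ℝ => (1 - u ^ 2) ^ (lam - 1)) volume (-1) T := by
    apply hInt1.mono_fun
    · exact (by fun_prop : Measurable (fun u : ℝ => (1 - u ^ 2) ^ (lam - 1))).aestronglyMeasurable
    · have hsub : Set.uIoc (-1 : ℝ) T ⊆ Set.Icc (-1) T := by
        rw [Set.uIoc_of_le hT1]
        exact Set.Ioc_subset_Icc_self
      filter_upwards [ae_restrict_mem measurableSet_uIoc] with u hu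
      have hu' := hsub hu
      have h1 : (0:ℝ) ≤ 1 - u ^ 2 := by
        have hh := mul_nonneg (by linarith [hu'.2.trans hT0] : (0:ℝ) ≤ 1 - u)
          (by linarith [hu'.1] : (0:ℝ) ≤ 1 + u)
        have he : (1 - u) * (1 + u) = 1 - u ^ 2 := by ring
        linarith
      have h2 : (0:ℝ) ≤ u + 1 := by linarith [hu'.1]
      rw [Real.norm_of_nonneg (Real.rpow_nonneg h1 _),
        Real.norm_of_nonneg (Real.rpow_nonneg h2 _)]
      exact hpt u hu'
  have hmono := intervalIntegral.integral_mono_on hT1 hInt2 hInt1 hpt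
  have hcalc : (∫ u in (-1:ℝ)..T, (u + 1) ^ (lam - 1)) = (T + 1) ^ lam / lam := by
    have h1 : (∫ u in (-1:ℝ)..T, (u + 1) ^ (lam - 1))
        = ∫ u in (-1 + 1 : ℝ)..(T + 1), u ^ (lam - 1) :=
      intervalIntegral.integral_comp_add_right (fun u : ℝ => u ^ (lam - 1)) 1
    rw [h1]
    norm_num
    rw [integral_rpow (Or.inl hlam1')]
    rw [Real.zero_rpow (by linarith : lam - 1 + 1 ≠ 0)]
    ring_nf
  have hfinal : (T + 1) ^ lam / lam ≤ (1/lam) * (c / a) ^ (2 * lam) := by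
    have h0T : 0 ≤ T + 1 := by linarith
    have hpow : (T + 1) ^ lam ≤ ((c / a) ^ 2) ^ lam :=
      Real.rpow_le_rpow h0T (by linarith [h1T]) hlam0.le
    have heq : ((c / a) ^ 2 : ℝ) ^ lam = (c / a) ^ (2 * lam) := by
      rw [← Real.rpow_natCast (c / a) 2, ← Real.rpow_mul (by positivity)]
      norm_num
    rw [div_eq_inv_mul, one_div]
    rw [heq] at hpow
    exact mul_le_mul_of_nonneg_left hpow (by positivity)
  calc (∫ u in (-1:ℝ)..T, (1 - u ^ 2) ^ (lam - 1))
      ≤ ∫ u in (-1:ℝ)..T, (u + 1) ^ (lam - 1) := hmono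
    _ = (T + 1) ^ lam / lam := hcalc
    _ ≤ (1/lam) * (c / a) ^ (2 * lam) := hfinal
end

section
/- Let 0 < λ < 1/2, 1 ≤ p < ∞, 0 ≤ γ ≤ 2λ+1, and set α = (2λ+1−γ)/p. Then there exists a constant c_{λ,p} > 0 such that every measurable function f on [1,∞) satisfies sup_{x ≥ 0, r > 0} (sinh(r/2))^{α−2λ−1} ∫_0^r A^λ_{cosh t}|f|(cosh x) (sinh t)^{2λ} dt ≤ c_{λ,p} · sup_{x ≥ 0, r > 0} ( (sinh(r/2))^{−γ} ∫_0^r (A^λ_{cosh t}|f|(cosh x))^p (sinh t)^{2λ} dt )^{1/p}. (Lemma 3: the Morrey–Gegenbauer embedding L_{p,λ,γ} ⊂ L_{1,λ,2λ+1−α} with ‖f‖_{L_{1,λ,2λ+1−α}} ≤ c_{λ,p} ‖f‖_{L_{p,λ,γ}}.) -/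
open Real MeasureTheory Set ENNReal

/-- The normalizing constant `Γ(λ+1/2)/(Γ(1/2)Γ(λ))` of the Gegenbauer shift. -/
noncomputable def gegenC (lam : ℝ) : ℝ :=
  Real.Gamma (lam + 1/2) / (Real.Gamma (1/2) * Real.Gamma lam)

/-- The (ℝ≥0∞-valued) Gegenbauer generalized shift
`A^λ_{cosh t} f (cosh x) = c_λ ∫_0^π f(cosh x cosh t − sinh x sinh t cos φ)(sin φ)^{2λ−1} dφ`,
for nonnegative `f`; it may take the value `+∞`. -/
noncomputable def shiftE (lam : ℝ) (f : ℝ → ℝ) (x t : ℝ) : ℝ≥0∞ :=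
  ENNReal.ofReal (gegenC lam) *
    ∫⁻ φ in Set.Ioc (0:ℝ) Real.pi,
      ENNReal.ofReal
        (f (Real.cosh x * Real.cosh t - Real.sinh x * Real.sinh t * Real.cos φ) *
          Real.sin φ ^ (2*lam - 1))


lemma holder_aux {p : ℝ} (hp : 1 ≤ p) (μ : Measure ℝ) {g w : ℝ → ℝ≥0∞}
    (hg : Measurable g) (hw : Measurable w) :
    ∫⁻ t, g t * w t ∂μ ≤
      (∫⁻ t, g t ^ p * w t ∂μ) ^ (1/p) * (∫⁻ t, w t ∂μ) ^ (1 - 1/p) := by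
  rcases eq_or_lt_of_le hp with h1 | h1
  · rw [← h1]; simp [ENNReal.rpow_one]
  · have hpq : p.HolderConjugate (p/(p-1)) := Real.HolderConjugate.conjExponent h1
    set q := p/(p-1) with hq
    have hp0 : p ≠ 0 := hpq.ne_zero
    have hq0 : q ≠ 0 := hpq.symm.ne_zero
    have hsum : 1/p + 1/q = 1 := by
      rw [one_div, one_div]; exact hpq.inv_add_inv_eq_one
    have hqinv : 1 - 1/p = 1/q := by linarith
    have key := ENNReal.lintegral_mul_le_Lp_mul_Lq μ hpq
      (f := fun t => g t * w t ^ (1/p)) (g := fun t => w t ^ (1/q))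
      (hg.mul (hw.pow measurable_const)).aemeasurable
      (hw.pow measurable_const).aemeasurable
    have e1 : ∀ t : ℝ, g t * w t ^ (1/p) * w t ^ (1/q) = g t * w t := by
      intro t
      rw [mul_assoc, ← ENNReal.rpow_add_of_nonneg _ _ hpq.one_div_nonneg hpq.symm.one_div_nonneg,
        hsum, ENNReal.rpow_one]
    have e2 : ∀ t : ℝ, (g t * w t ^ (1/p)) ^ p = g t ^ p * w t := by
      intro t
      rw [ENNReal.mul_rpow_of_nonneg _ _ (le_of_lt (by linarith : (0:ℝ) < p)),
        ← ENNReal.rpow_mul, one_div, inv_mul_cancel₀ hp0, ENNReal.rpow_one]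
    have e3 : ∀ t : ℝ, (w t ^ (1/q)) ^ q = w t := by
      intro t
      rw [← ENNReal.rpow_mul, one_div, inv_mul_cancel₀ hq0, ENNReal.rpow_one]
    simp only [Pi.mul_apply] at key
    simp_rw [e1, e2, e3] at key
    rw [hqinv]
    exact key

lemma shiftE_meas (lam : ℝ) {f : ℝ → ℝ} (hf : Measurable f) (x : ℝ) :
    Measurable (shiftE lam f x) := by
  unfold shiftE
  refine Measurable.const_mul ?_ _
  refine Measurable.lintegral_prod_right (f := fun t φ => ENNReal.ofReal
    (f (Real.cosh x * Real.cosh t - Real.sinh x * Real.sinh t * Real.cos φ) *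
      Real.sin φ ^ (2*lam - 1))) ?_
  refine ENNReal.measurable_ofReal.comp ?_
  refine Measurable.mul ?_ ?_
  · exact hf.comp (by fun_prop)
  · exact (Real.measurable_sin.comp measurable_snd).pow measurable_const

lemma aux_real {lam : ℝ} (hlam0 : 0 < lam) (hlam1 : lam < 1/2) {r : ℝ} (hr : 0 < r) :
    r * Real.sinh r ^ (2*lam) ≤
      (2 ^ (2*lam+1) / (1/2 - lam)) * Real.sinh (r/2) ^ (2*lam+1) := by
  set s := Real.sinh (r/2) with hsdef
  have hβ : 0 < 1/2 - lam := by linarith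
  have hs : 0 < s := Real.sinh_pos_iff.2 (by linarith)
  have hc : 0 < Real.cosh (r/2) := Real.cosh_pos _
  have h2l : (0:ℝ) ≤ 2*lam := by linarith
  have hsr : Real.sinh r = 2 * s * Real.cosh (r/2) := by
    have := Real.sinh_two_mul (r/2)
    rw [show 2 * (r/2) = r by ring] at this
    exact this
  have hcosh : Real.cosh (r/2) ^ (2*lam) ≤ Real.exp (lam * r) := by
    have h1 : Real.cosh (r/2) ≤ Real.exp (r/2) := by
      rw [Real.cosh_eq]
      have := Real.exp_pos (-(r/2))
      have h2 : Real.exp (-(r/2)) ≤ Real.exp (r/2) := Real.exp_le_exp.2 (by linarith)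
      linarith
    calc Real.cosh (r/2) ^ (2*lam) ≤ Real.exp (r/2) ^ (2*lam) :=
          Real.rpow_le_rpow hc.le h1 h2l
      _ = Real.exp (lam * r) := by rw [← Real.exp_mul]; ring_nf
  have key : r * Real.exp (lam * r) ≤ (1/(1/2-lam)) * (2*s) := by
    have h1 : (1/2-lam)*r + 1 ≤ Real.exp ((1/2-lam)*r) := Real.add_one_le_exp _
    have h2 : 1 ≤ Real.exp (lam*r) := Real.one_le_exp (by positivity)
    have h3 : Real.exp (lam*r) * Real.exp ((1/2-lam)*r) = Real.exp (r/2) := by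
      rw [← Real.exp_add]; ring_nf
    have h4 : Real.exp (r/2) - 1 ≤ 2*s := by
      rw [hsdef, Real.sinh_eq]
      have : Real.exp (-(r/2)) ≤ 1 := Real.exp_le_one_iff.2 (by linarith)
      linarith
    rw [div_mul_eq_mul_div, le_div_iff₀ hβ]
    nlinarith [Real.exp_pos (lam*r), Real.exp_pos ((1/2-lam)*r)]
  have e1 : s ^ (2*lam+1) = s ^ (2*lam) * s := by
    rw [Real.rpow_add hs, Real.rpow_one]
  have e2 : (2:ℝ) ^ (2*lam+1) = 2 ^ (2*lam) * 2 := by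
    rw [Real.rpow_add two_pos, Real.rpow_one]
  have hA : (0:ℝ) ≤ 2 ^ (2*lam) := Real.rpow_nonneg (by norm_num) _
  have hB : (0:ℝ) ≤ s ^ (2*lam) := Real.rpow_nonneg hs.le _
  calc r * Real.sinh r ^ (2*lam)
      = r * ((2*s) * Real.cosh (r/2)) ^ (2*lam) := by rw [hsr]
    _ = r * ((2:ℝ) ^ (2*lam) * s ^ (2*lam) * Real.cosh (r/2) ^ (2*lam)) := by
        rw [Real.mul_rpow (by positivity) hc.le, Real.mul_rpow (by norm_num) hs.le]
    _ = (2 ^ (2*lam) * s ^ (2*lam)) * (r * Real.cosh (r/2) ^ (2*lam)) := by ring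
    _ ≤ (2 ^ (2*lam) * s ^ (2*lam)) * (r * Real.exp (lam * r)) := by
        have := mul_le_mul_of_nonneg_left hcosh hr.le
        exact mul_le_mul_of_nonneg_left this (by positivity)
    _ ≤ (2 ^ (2*lam) * s ^ (2*lam)) * ((1/(1/2-lam)) * (2*s)) :=
        mul_le_mul_of_nonneg_left key (by positivity)
    _ = (2 ^ (2*lam+1) / (1/2 - lam)) * s ^ (2*lam+1) := by
        rw [e1, e2]; field_simp

/-- Lemma 3 (Morrey–Gegenbauer embedding): for `1 ≤ p < ∞`, `0 ≤ γ ≤ 2λ+1` and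
`α = (2λ+1−γ)/p`, one has `L_{p,λ,γ} ⊂ L_{1,λ,2λ+1−α}` with
`‖f‖_{L_{1,λ,2λ+1−α}} ≤ c_{λ,p} ‖f‖_{L_{p,λ,γ}}`. -/
theorem morrey_gegenbauer_embedding (lam p gam alpha : ℝ)
    (hlam0 : 0 < lam) (hlam1 : lam < 1/2) (hp : 1 ≤ p)
    (hg0 : 0 ≤ gam) (hg1 : gam ≤ 2*lam + 1) (halpha : alpha = (2*lam + 1 - gam) / p) :
    ∃ c : ℝ, 0 < c ∧ ∀ f : ℝ → ℝ, Measurable f →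
      (⨆ (x : ℝ) (_ : 0 ≤ x) (r : ℝ) (_ : 0 < r),
          ENNReal.ofReal (Real.sinh (r/2) ^ (alpha - 2*lam - 1)) *
            ∫⁻ t in Set.Ioc (0:ℝ) r,
              shiftE lam (fun z => |f z|) x t * ENNReal.ofReal (Real.sinh t ^ (2*lam)))
        ≤ ENNReal.ofReal c *
          ⨆ (x : ℝ) (_ : 0 ≤ x) (r : ℝ) (_ : 0 < r),
            (ENNReal.ofReal (Real.sinh (r/2) ^ (-gam)) *
              ∫⁻ t in Set.Ioc (0:ℝ) r,
                (shiftE lam (fun z => |f z|) x t) ^ p *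
                  ENNReal.ofReal (Real.sinh t ^ (2*lam))) ^ (1/p) := by
  have hβ : 0 < 1/2 - lam := by linarith
  have hp0 : 0 < p := lt_of_lt_of_le one_pos hp
  set K : ℝ := 2 ^ (2*lam+1) / (1/2 - lam) with hKdef
  have hA1 : (1:ℝ) ≤ 2 ^ (2*lam+1) := Real.one_le_rpow (by norm_num) (by linarith)
  have hK1 : 1 ≤ K := (one_le_div hβ).2 (by linarith)
  have hK0 : 0 < K := lt_of_lt_of_le one_pos hK1
  refine ⟨K, hK0, ?_⟩
  intro f hf
  set F : ℝ → ℝ := fun z => |f z| with hF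
  have hFm : Measurable F := hf.abs
  set w : ℝ → ℝ≥0∞ := fun t => ENNReal.ofReal (Real.sinh t ^ (2*lam)) with hw
  have hwm : Measurable w :=
    ENNReal.measurable_ofReal.comp (Real.measurable_sinh.pow measurable_const)
  -- exponent bookkeeping
  have ha0 : 0 ≤ 1 - 1/p := by
    have : 1/p ≤ 1 := by rw [div_le_one hp0]; exact hp
    linarith
  have ha1 : 1 - 1/p ≤ 1 := by
    have : 0 ≤ 1/p := by positivity
    linarith
  have hexp : alpha - 2*lam - 1 + (2*lam+1)*(1 - 1/p) = -gam * (1/p) := by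
    rw [halpha]; field_simp; ring
  apply iSup_le; intro x; apply iSup_le; intro hx
  apply iSup_le; intro r; apply iSup_le; intro hr
  set s := Real.sinh (r/2) with hsdef
  have hs : 0 < s := Real.sinh_pos_iff.2 (by linarith)
  set μ := volume.restrict (Set.Ioc (0:ℝ) r) with hμ
  set g : ℝ → ℝ≥0∞ := fun t => shiftE lam F x t with hg
  have hgm : Measurable g := shiftE_meas lam hFm x
  set T : ℝ≥0∞ := ∫⁻ t, g t ^ p * w t ∂μ with hT
  -- Hölder
  have hH : ∫⁻ t, g t * w t ∂μ ≤ T ^ (1/p) * (∫⁻ t, w t ∂μ) ^ (1 - 1/p) :=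
    holder_aux hp μ hgm hwm
  -- weight integral bound
  have hW : ∫⁻ t, w t ∂μ ≤ ENNReal.ofReal (K * s ^ (2*lam+1)) := by
    have hptw : ∀ t ∈ Set.Ioc (0:ℝ) r, w t ≤ ENNReal.ofReal (Real.sinh r ^ (2*lam)) := by
      intro t ht
      exact ENNReal.ofReal_le_ofReal (Real.rpow_le_rpow (Real.sinh_nonneg_iff.2 ht.1.le)
        (Real.sinh_le_sinh.2 ht.2) (by linarith))
    calc ∫⁻ t, w t ∂μ ≤ ∫⁻ _ in Set.Ioc (0:ℝ) r, ENNReal.ofReal (Real.sinh r ^ (2*lam)) :=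
          setLIntegral_mono measurable_const hptw
      _ = ENNReal.ofReal (Real.sinh r ^ (2*lam)) * volume (Set.Ioc (0:ℝ) r) :=
          setLIntegral_const _ _
      _ = ENNReal.ofReal (r * Real.sinh r ^ (2*lam)) := by
          rw [Real.volume_Ioc, sub_zero, ← ENNReal.ofReal_mul (Real.rpow_nonneg
            (Real.sinh_nonneg_iff.2 (by linarith : (0:ℝ) ≤ r)) _)]
          rw [mul_comm]
      _ ≤ ENNReal.ofReal (K * s ^ (2*lam+1)) :=
          ENNReal.ofReal_le_ofReal (by rw [hKdef]; exact aux_real hlam0 hlam1 hr)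
  -- final chain
  have hSup : (ENNReal.ofReal (s ^ (-gam)) *
      ∫⁻ t in Set.Ioc (0:ℝ) r, shiftE lam F x t ^ p *
        ENNReal.ofReal (Real.sinh t ^ (2*lam))) ^ (1/p) ≤
      ⨆ (x : ℝ) (_ : 0 ≤ x) (r : ℝ) (_ : 0 < r),
        (ENNReal.ofReal (Real.sinh (r/2) ^ (-gam)) *
          ∫⁻ t in Set.Ioc (0:ℝ) r, shiftE lam F x t ^ p *
            ENNReal.ofReal (Real.sinh t ^ (2*lam))) ^ (1/p) := by
    refine le_iSup_of_le x ?_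
    refine le_iSup_of_le hx ?_
    refine le_iSup_of_le r ?_
    refine le_iSup_of_le hr ?_
    exact le_rfl
  calc ENNReal.ofReal (s ^ (alpha - 2*lam - 1)) * ∫⁻ t, g t * w t ∂μ
      ≤ ENNReal.ofReal (s ^ (alpha - 2*lam - 1)) *
        (T ^ (1/p) * (ENNReal.ofReal (K * s ^ (2*lam+1))) ^ (1 - 1/p)) := by
        refine mul_le_mul_right (le_trans hH ?_) _
        exact mul_le_mul_right (ENNReal.rpow_le_rpow hW ha0) _
    _ = ENNReal.ofReal (K ^ (1 - 1/p)) *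
        (ENNReal.ofReal (s ^ (alpha - 2*lam - 1)) *
          ENNReal.ofReal (s ^ ((2*lam+1) * (1 - 1/p))) * T ^ (1/p)) := by
        rw [ENNReal.ofReal_mul hK0.le, ENNReal.mul_rpow_of_nonneg _ _ ha0,
          ENNReal.ofReal_rpow_of_nonneg hK0.le ha0,
          ENNReal.ofReal_rpow_of_nonneg (Real.rpow_nonneg hs.le _) ha0,
          ← Real.rpow_mul hs.le]
        ring
    _ = ENNReal.ofReal (K ^ (1 - 1/p)) *
        (ENNReal.ofReal (s ^ (-gam * (1/p))) * T ^ (1/p)) := by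
        rw [← ENNReal.ofReal_mul (Real.rpow_nonneg hs.le _), ← Real.rpow_add hs, hexp]
    _ ≤ ENNReal.ofReal K * (ENNReal.ofReal (s ^ (-gam * (1/p))) * T ^ (1/p)) := by
        refine mul_le_mul_left (ENNReal.ofReal_le_ofReal ?_) _
        calc K ^ (1 - 1/p) ≤ K ^ (1:ℝ) := Real.rpow_le_rpow_of_exponent_le hK1 ha1
          _ = K := Real.rpow_one K
    _ = ENNReal.ofReal K * (ENNReal.ofReal (s ^ (-gam)) * T) ^ (1/p) := by
        rw [ENNReal.mul_rpow_of_nonneg _ _ (by positivity : (0:ℝ) ≤ 1/p),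
          ENNReal.ofReal_rpow_of_nonneg (Real.rpow_nonneg hs.le _)
            (by positivity : (0:ℝ) ≤ 1/p),
          ← Real.rpow_mul hs.le]
    _ ≤ ENNReal.ofReal K *
        ⨆ (x : ℝ) (_ : 0 ≤ x) (r : ℝ) (_ : 0 < r),
          (ENNReal.ofReal (Real.sinh (r/2) ^ (-gam)) *
            ∫⁻ t in Set.Ioc (0:ℝ) r, shiftE lam F x t ^ p *
              ENNReal.ofReal (Real.sinh t ^ (2*lam))) ^ (1/p) :=
        mul_le_mul_right hSup _
end
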